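/- The language Π = {a^{φ(j,n)} : (j,n) ∈ Δ} over the one-letter alphabet Σ = {a} is not REG-dissectible. -/

import Mathlib

open Real Filter Nat

/-- `L₁` dissects `L₂` if both `L₂ \ L₁` and `L₁ ∩ L₂` are infinite. -/
def Dissects {T : Type*} (L₁ L₂ : Set (List T)) : Prop :=
  (L₂ \ L₁).Infinite ∧ (L₁ ∩ L₂).Infinite

/-- `L` is REG-dissectible if some regular language dissects it. -/
def RegDissectible {T : Type*} (L : Set (List T)) : Prop :=
  ∃ R : Set (List T), Language.IsRegular R ∧ Dissects R L

/-- `L` is `c`-geometrically growing. -/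
def GeomGrowing {T : Type*} (c : ℝ) (L : Set (List T)) : Prop :=
  ∀ u ∈ L, ∃ v ∈ L, u.length < v.length ∧ (v.length : ℝ) ≤ c * u.length

/-- `γ = 1/(ln β − ln α)`. -/
noncomputable def gam (α β : ℕ) : ℝ := 1 / (Real.log β - Real.log α)

/-- `⌊γ ln n⌋`. -/
noncomputable def flog (α β n : ℕ) : ℕ := ⌊gam α β * Real.log n⌋₊

/-- `(j, n) ∈ Δ`. -/
def InDelta (α β j n : ℕ) : Prop := α * flog α β n < n ∧ j ≤ flog α β n

/-- `φ(j,n) = (β/α)^j · n!`, regarded as a real number. -/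
noncomputable def phi (α β j n : ℕ) : ℝ := ((β : ℝ) / (α : ℝ)) ^ j * (n ! : ℝ)

/-- The language `Π = {a^{φ(j,n)} : (j,n) ∈ Δ}` over the one-letter alphabet. -/
def Pi' (α β : ℕ) : Set (List (Fin 1)) :=
  {w | ∃ j n : ℕ, InDelta α β j n ∧ (w.length : ℝ) = phi α β j n}

/-! ### Auxiliary lemmas -/

/-- Every word over `Fin 1` is a replicate of `0`. -/
lemma aux_eq_replicate (w : List (Fin 1)) : w = List.replicate w.length 0 := by
  rw [List.eq_replicate_iff]
  exact ⟨rfl, fun b _ => Subsingleton.elim b 0⟩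

/-- An infinite set of unary words contains arbitrarily long words. -/
lemma aux_exists_long {S : Set (List (Fin 1))} (hS : S.Infinite) (K : ℕ) :
    ∃ w ∈ S, K < w.length := by
  have hinj : Set.InjOn List.length S := by
    intro u _ v _ h
    rw [aux_eq_replicate u, aux_eq_replicate v, h]
  obtain ⟨m, ⟨w, hw, rfl⟩, hm⟩ := (hS.image hinj).exists_gt K
  exact ⟨w, hw, hm⟩

lemma aux_evalFrom_replicate {σ : Type} (M : DFA (Fin 1) σ) (k : ℕ) (s : σ) :
    M.evalFrom s (List.replicate k 0) = (fun q => M.step q 0)^[k] s := by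
  induction k generalizing s with
  | zero => rfl
  | succ k ih =>
      rw [List.replicate_succ]
      have : M.evalFrom s (0 :: List.replicate k 0)
          = M.evalFrom (M.step s 0) (List.replicate k 0) := rfl
      rw [this, ih, ← Function.iterate_succ_apply]

/-- Eventual periodicity of a unary DFA. -/
lemma aux_dfa_periodic {σ : Type} [Fintype σ] (M : DFA (Fin 1) σ) :
    ∃ N p : ℕ, 0 < p ∧ ∀ k, N ≤ k → ∀ t, p ∣ t →
      (List.replicate (k + t) (0 : Fin 1) ∈ M.accepts ↔
        List.replicate k (0 : Fin 1) ∈ M.accepts) := by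
  set g : σ → σ := fun q => M.step q 0 with hg
  set f : ℕ → σ := fun k => g^[k] M.start with hf
  obtain ⟨x, y, hxy, hfxy⟩ :=
    Fintype.exists_ne_map_eq_of_card_lt (fun i : Fin (Fintype.card σ + 1) => f i)
      (by simp)
  -- wlog x < y
  obtain ⟨i, j, hij, hfij⟩ : ∃ i j : ℕ, i < j ∧ f i = f j := by
    rcases lt_or_gt_of_ne hxy with h | h
    · exact ⟨x, y, by exact_mod_cast h, hfxy⟩
    · exact ⟨y, x, by exact_mod_cast h, hfxy.symm⟩
  refine ⟨i, j - i, by omega, ?_⟩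
  have hstep : ∀ k, i ≤ k → f (k + (j - i)) = f k := by
    intro k hk
    obtain ⟨t, rfl⟩ := le_iff_exists_add.mp hk
    have h1 : i + t + (j - i) = t + j := by omega
    have h2 : i + t = t + i := by omega
    rw [h1, h2]
    show g^[t + j] M.start = g^[t + i] M.start
    rw [Function.iterate_add_apply, Function.iterate_add_apply]
    exact congrArg _ hfij.symm
  have hmul : ∀ s k, i ≤ k → f (k + (j - i) * s) = f k := by
    intro s
    induction s with
    | zero => intro k _; simp
    | succ s ih =>
        intro k hk
        have : k + (j - i) * (s + 1) = (k + (j - i) * s) + (j - i) := by ring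
        rw [this, hstep _ (le_trans hk (Nat.le_add_right _ _)), ih k hk]
  intro k hk t ht
  obtain ⟨s, rfl⟩ := ht
  have hev : ∀ m, (List.replicate m (0 : Fin 1) ∈ M.accepts ↔ f m ∈ M.accept) := by
    intro m
    rw [DFA.mem_accepts]
    show M.evalFrom M.start (List.replicate m 0) ∈ M.accept ↔ _
    rw [aux_evalFrom_replicate]
  rw [hev, hev, hmul s k hk]

lemma aux_pow_fact_dvd (α : ℕ) : ∀ j, (α !) ^ j ∣ (α * j)! := by
  intro j
  induction j with
  | zero => simp
  | succ j ih =>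
      have h1 : (α !) ^ (j + 1) = (α !) ^ j * α ! := by ring
      have h2 : α * (j + 1) = α * j + α := by ring
      rw [h1, h2]
      exact dvd_trans (mul_dvd_mul ih dvd_rfl)
        (Nat.factorial_mul_factorial_dvd_factorial_add _ _)

lemma aux_key_dvd {α β : ℕ} (hα : 0 < α) {p j n : ℕ} (hp : 0 < p)
    (hj : j ≤ flog α β n) (hn : α * flog α β n + p ≤ n) :
    p * α ^ j ∣ n ! := by
  have h1 : p * α ^ j ∣ p ! * (α !) ^ j :=
    mul_dvd_mul (Nat.dvd_factorial hp le_rfl)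
      (pow_dvd_pow_of_dvd (Nat.dvd_factorial hα le_rfl) j)
  have h2 : p ! * (α !) ^ j ∣ p ! * (α * j)! :=
    mul_dvd_mul_left _ (aux_pow_fact_dvd α j)
  have h3 : p ! * (α * j)! ∣ (p + α * j)! :=
    Nat.factorial_mul_factorial_dvd_factorial_add _ _
  have h4 : (p + α * j)! ∣ n ! := by
    apply Nat.factorial_dvd_factorial
    have : α * j ≤ α * flog α β n := Nat.mul_le_mul_left α hj
    omega
  exact dvd_trans h1 (dvd_trans h2 (dvd_trans h3 h4))

lemma aux_gam_pos {α β : ℕ} (hα : 0 < α) (hαβ : α < β) : 0 < gam α β := by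
  have h : Real.log α < Real.log β := by
    apply Real.log_lt_log (by exact_mod_cast hα) (by exact_mod_cast hαβ)
  rw [gam]
  exact one_div_pos.mpr (by linarith)

lemma aux_log_ratio {α β : ℕ} (hα : 0 < α) (hαβ : α < β) :
    Real.log ((β : ℝ) / (α : ℝ)) = Real.log β - Real.log α := by
  rw [Real.log_div (by exact_mod_cast (by omega : β ≠ 0)) (by exact_mod_cast hα.ne')]

/-- Key length facts: length ≤ (n+1)! and, under divisibility, p divides the length. -/
lemma aux_length_facts {α β : ℕ} (hα : 0 < α) (hαβ : α < β) {j n L : ℕ}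
    (hd : InDelta α β j n) (hL : (L : ℝ) = phi α β j n) :
    L ≤ (n + 1)! ∧ ∀ p : ℕ, 0 < p → p * α ^ j ∣ n ! → p ∣ L := by
  have hn1 : 1 ≤ n := by
    rcases Nat.eq_zero_or_pos n with h | h
    · exfalso; have := hd.1; omega
    · exact h
  have hαR : (0 : ℝ) < α := by exact_mod_cast hα
  have hr1 : (1 : ℝ) ≤ (β : ℝ) / (α : ℝ) := by
    rw [le_div_iff₀ hαR]
    exact_mod_cast (by omega : 1 * α ≤ β)
  have hgam : 0 < gam α β := aux_gam_pos hα hαβ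
  have hlogr : Real.log ((β : ℝ) / (α : ℝ)) = 1 / gam α β := by
    rw [aux_log_ratio hα hαβ, gam, one_div_one_div]
  -- (β/α)^j ≤ n
  have hpow : ((β : ℝ) / (α : ℝ)) ^ j ≤ (n : ℝ) := by
    have h1 : ((β : ℝ) / (α : ℝ)) ^ j ≤ ((β : ℝ) / (α : ℝ)) ^ (flog α β n) :=
      pow_le_pow_right₀ hr1 hd.2
    have hrpos : (0 : ℝ) < (β : ℝ) / (α : ℝ) := lt_of_lt_of_le one_pos hr1
    have h2 : ((β : ℝ) / (α : ℝ)) ^ (flog α β n) ≤ (n : ℝ) := by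
      have hfl : (flog α β n : ℝ) ≤ gam α β * Real.log n :=
        Nat.floor_le (mul_nonneg hgam.le (Real.log_natCast_nonneg n))
      have hlog : Real.log (((β : ℝ) / (α : ℝ)) ^ (flog α β n)) ≤ Real.log n := by
        rw [Real.log_pow, hlogr]
        calc (flog α β n : ℝ) * (1 / gam α β)
            ≤ gam α β * Real.log n * (1 / gam α β) := by
              apply mul_le_mul_of_nonneg_right hfl (by positivity)
          _ = Real.log n := by field_simp
      calc ((β : ℝ) / (α : ℝ)) ^ (flog α β n)
          = Real.exp (Real.log (((β : ℝ) / (α : ℝ)) ^ (flog α β n))) :=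
            (Real.exp_log (by positivity)).symm
        _ ≤ Real.exp (Real.log n) := Real.exp_le_exp.mpr hlog
        _ = (n : ℝ) := Real.exp_log (by exact_mod_cast hn1)
    exact le_trans h1 h2
  constructor
  · -- L ≤ (n+1)!
    have h1 : (L : ℝ) ≤ (n : ℝ) * (n ! : ℝ) := by
      rw [hL, phi]
      exact mul_le_mul_of_nonneg_right hpow (by positivity)
    have h2 : L ≤ n * n ! := by exact_mod_cast h1
    calc L ≤ n * n ! := h2
      _ ≤ (n + 1) * n ! := Nat.mul_le_mul_right _ (by omega)
      _ = (n + 1)! := rfl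
  · intro p hp hdvd
    obtain ⟨m, hm⟩ := hdvd
    have hLr : (L : ℝ) = ((β ^ j * (p * m) : ℕ) : ℝ) := by
      rw [hL, phi, hm]
      push_cast
      rw [div_pow]
      field_simp
    have : L = β ^ j * (p * m) := by exact_mod_cast hLr
    exact ⟨β ^ j * m, by rw [this]; ring⟩

/-- Eventually `α * flog α β n + p ≤ n`. -/
lemma aux_eventually_bound {α β : ℕ} (hα : 0 < α) (hαβ : α < β) (p : ℕ) :
    ∃ N₀ : ℕ, ∀ n, N₀ ≤ n → α * flog α β n + p ≤ n := by
  have hgam : 0 < gam α β := aux_gam_pos hα hαβ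
  have hlo : (fun x : ℝ => (α : ℝ) * gam α β * Real.log x) =o[atTop] (id : ℝ → ℝ) :=
    (Real.isLittleO_log_id_atTop.const_mul_left _)
  have h1 : ∀ᶠ x : ℝ in atTop, ‖(α : ℝ) * gam α β * Real.log x‖ ≤ (1/2) * ‖x‖ :=
    hlo.bound (by norm_num)
  have h2 : ∀ᶠ x : ℝ in atTop, (p : ℝ) ≤ (1/2) * x := by
    filter_upwards [eventually_ge_atTop (2 * (p : ℝ))] with x hx
    linarith
  have h3 : ∀ᶠ x : ℝ in atTop, (0 : ℝ) ≤ x := eventually_ge_atTop 0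
  have hN : ∀ᶠ n : ℕ in atTop, (α : ℝ) * (flog α β n : ℝ) + (p : ℝ) ≤ (n : ℝ) := by
    have := (tendsto_natCast_atTop_atTop (R := ℝ)).eventually (h1.and (h2.and h3))
    filter_upwards [this] with n ⟨ha, hb, hc⟩
    have hfl : (flog α β n : ℝ) ≤ gam α β * Real.log n :=
      Nat.floor_le (mul_nonneg hgam.le (Real.log_natCast_nonneg n))
    have : (α : ℝ) * (flog α β n : ℝ) ≤ (α : ℝ) * gam α β * Real.log n := by
      calc (α : ℝ) * (flog α β n : ℝ) ≤ (α : ℝ) * (gam α β * Real.log n) :=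
            mul_le_mul_of_nonneg_left hfl (by positivity)
        _ = (α : ℝ) * gam α β * Real.log n := by ring
    have h4 : (α : ℝ) * gam α β * Real.log n ≤ (1/2) * (n : ℝ) := by
      calc (α : ℝ) * gam α β * Real.log n ≤ ‖(α : ℝ) * gam α β * Real.log n‖ :=
            le_abs_self _
        _ ≤ (1/2) * ‖(n : ℝ)‖ := ha
        _ = (1/2) * (n : ℝ) := by rw [Real.norm_eq_abs, abs_of_nonneg hc]
    linarith
  obtain ⟨N₀, hN₀⟩ := eventually_atTop.mp hN
  refine ⟨N₀, fun n hn => ?_⟩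
  have := hN₀ n hn
  exact_mod_cast this

/-- The language `Π` is not REG-dissectible. -/
theorem stmt_1 (α β : ℕ) (hα : 0 < α) (hαβ : α < β) :
    ¬ RegDissectible (Pi' α β) := by
  rintro ⟨R, ⟨σ, _, M, hM⟩, hdiff, hinter⟩
  obtain ⟨N, p, hp, hper⟩ := aux_dfa_periodic M
  obtain ⟨N₀, hN₀⟩ := aux_eventually_bound hα hαβ p
  set K : ℕ := max N ((N₀ + 1)!) with hK
  -- every sufficiently long word of Π has length divisible by p
  have hkey : ∀ w ∈ Pi' α β, K < w.length → p ∣ w.length ∧ N ≤ w.length := by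
    rintro w ⟨j, n, hd, hL⟩ hlen
    obtain ⟨hle, hdvd⟩ := aux_length_facts hα hαβ hd hL
    have hn : N₀ ≤ n := by
      by_contra h
      push_neg at h
      have : (n + 1)! ≤ (N₀ + 1)! := Nat.factorial_le (by omega)
      have : w.length ≤ (N₀ + 1)! := le_trans hle this
      omega
    have hb : α * flog α β n + p ≤ n := hN₀ n hn
    have := hdvd p hp (aux_key_dvd hα hp hd.2 hb)
    exact ⟨this, by omega⟩
  obtain ⟨w₁, hw₁, hl₁⟩ := aux_exists_long hdiff K
  obtain ⟨w₂, hw₂, hl₂⟩ := aux_exists_long hinter K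
  obtain ⟨hd₁, hN₁⟩ := hkey w₁ hw₁.1 hl₁
  obtain ⟨hd₂, hN₂⟩ := hkey w₂ hw₂.2 hl₂
  have hacc₂ : List.replicate w₂.length (0 : Fin 1) ∈ M.accepts := by
    rw [hM, ← aux_eq_replicate]
    exact hw₂.1
  have he₁ : List.replicate (w₁.length + w₂.length) (0 : Fin 1) ∈ M.accepts ↔
      List.replicate w₁.length (0 : Fin 1) ∈ M.accepts :=
    hper _ hN₁ _ hd₂
  have he₂ : List.replicate (w₂.length + w₁.length) (0 : Fin 1) ∈ M.accepts ↔
      List.replicate w₂.length (0 : Fin 1) ∈ M.accepts :=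
    hper _ hN₂ _ hd₁
  rw [Nat.add_comm] at he₂
  have hacc₁ : List.replicate w₁.length (0 : Fin 1) ∈ M.accepts :=
    he₁.mp (he₂.mpr hacc₂)
  apply hw₁.2
  rw [← hM] at *
  rw [aux_eq_replicate w₁]
  exact hacc₁
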